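/- Let k ≥ 1, let f ∈ C^k([0,l]) with 0 ≤ l ≤ 1, let σ_1, …, σ_{k−1} ∈ {±1}, and let ε > 0, κ > 0. Assume σ_j f^{(j)}(0) ≥ −ε and σ_j f^{(j)}(l) ≥ −ε for every 1 ≤ j ≤ k−1, and |f^{(k)}(t)| ≥ κ for all t ∈ [0,l]. Then |f(l) − f(0)| ≥ κ l^k / k! − (k−1) ε l. -/

import Mathlib

open Set

private lemma mono_aux {l : ℝ} {H H' : ℝ → ℝ}
    (hc : ContinuousOn H (Icc 0 l))
    (hd : ∀ t ∈ Ioo 0 l, HasDerivAt H (H' t) t)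
    (hpos : ∀ t ∈ Ioo 0 l, 0 ≤ H' t) : MonotoneOn H (Icc 0 l) := by
  apply monotoneOn_of_deriv_nonneg (convex_Icc 0 l) hc
  · intro t ht
    rw [interior_Icc] at ht
    exact (hd t ht).differentiableAt.differentiableWithinAt
  · intro t ht
    rw [interior_Icc] at ht
    rw [(hd t ht).deriv]
    exact hpos t ht

private lemma hasDerivAt_poly (c : ℝ) (m : ℕ) (t : ℝ) :
    HasDerivAt (fun t : ℝ => c * t ^ (m + 1)) (c * ((m : ℝ) + 1) * t ^ m) t := by
  have := (hasDerivAt_pow (m + 1) t).const_mul c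
  simpa [mul_comm, mul_assoc, mul_left_comm] using this

private lemma factorial_id (κ : ℝ) (m : ℕ) :
    κ / (m + 1).factorial * ((m : ℝ) + 1) = κ / m.factorial := by
  rw [Nat.factorial_succ]
  have h1 : ((m : ℝ) + 1) ≠ 0 := by positivity
  have h2 : ((m.factorial : ℝ)) ≠ 0 := by positivity
  push_cast
  field_simp

private lemma super_add {l t : ℝ} (ht0 : 0 ≤ t) (htl : t ≤ l) (m : ℕ) :
    (l - t) ^ (m + 1) + t ^ (m + 1) ≤ l ^ (m + 1) := by
  have := pow_add_pow_le (x := l - t) (y := t) (n := m + 1)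
    (by linarith) ht0 (Nat.succ_ne_zero m)
  simpa using this

section Steps

variable {l ε κ : ℝ} {m : ℕ} {F F' : ℝ → ℝ}

private lemma monoA (hl : 0 < l) (hκ : 0 < κ)
    (hc : ContinuousOn F (Icc 0 l))
    (hd : ∀ t ∈ Ioo 0 l, HasDerivAt F (F' t) t)
    (hlow : ∀ t ∈ Icc 0 l, κ * t ^ m / m.factorial - m * ε ≤ F' t) :
    MonotoneOn (fun t => F t - κ / (m + 1).factorial * t ^ (m + 1) + m * ε * t) (Icc 0 l) := by
  apply mono_aux (H' := fun t => F' t - κ / (m + 1).factorial * ((m : ℝ) + 1) * t ^ m + m * ε)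
  · apply ContinuousOn.add
    · exact hc.sub (Continuous.continuousOn (by continuity))
    · exact Continuous.continuousOn (by continuity)
  · intro t ht
    have h1 := (hd t ht).sub (hasDerivAt_poly (κ / (m + 1).factorial) m t)
    have h2 : HasDerivAt (fun t : ℝ => (m : ℝ) * ε * t) ((m : ℝ) * ε) t := by
      simpa using (hasDerivAt_id t).const_mul ((m : ℝ) * ε)
    exact h1.add h2
  · intro t ht
    have h3 := hlow t (Ioo_subset_Icc_self ht)
    rw [factorial_id]
    have : κ * t ^ m / m.factorial = κ / m.factorial * t ^ m := by ring
    linarith [this ▸ h3]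

private lemma monoB (hl : 0 < l) (hκ : 0 < κ)
    (hc : ContinuousOn F (Icc 0 l))
    (hd : ∀ t ∈ Ioo 0 l, HasDerivAt F (F' t) t)
    (hlow : ∀ t ∈ Icc 0 l, κ * (l - t) ^ m / m.factorial - m * ε ≤ F' t) :
    MonotoneOn (fun t => F t + κ / (m + 1).factorial * (l - t) ^ (m + 1) + m * ε * t)
      (Icc 0 l) := by
  apply mono_aux
    (H' := fun t => F' t - κ / (m + 1).factorial * ((m : ℝ) + 1) * (l - t) ^ m + m * ε)
  · apply ContinuousOn.add
    · exact hc.add (Continuous.continuousOn (by continuity))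
    · exact Continuous.continuousOn (by continuity)
  · intro t ht
    have hp : HasDerivAt (fun t : ℝ => κ / (m + 1).factorial * (l - t) ^ (m + 1))
        (-(κ / (m + 1).factorial * ((m : ℝ) + 1) * (l - t) ^ m)) t := by
      have h0 : HasDerivAt (fun t : ℝ => l - t) (-1) t := by
        simpa using (hasDerivAt_id t).const_sub l
      have := (hasDerivAt_poly (κ / (m + 1).factorial) m (l - t)).comp t h0
      simpa [Function.comp_def, mul_comm, mul_assoc, mul_left_comm] using this
    have h2 : HasDerivAt (fun t : ℝ => (m : ℝ) * ε * t) ((m : ℝ) * ε) t := by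
      simpa using (hasDerivAt_id t).const_mul ((m : ℝ) * ε)
    have h9 := ((hd t ht).add hp).add h2
    exact h9.congr_deriv (by ring)
  · intro t ht
    have h3 := hlow t (Ioo_subset_Icc_self ht)
    rw [factorial_id]
    have : κ * (l - t) ^ m / m.factorial = κ / m.factorial * (l - t) ^ m := by ring
    linarith [this ▸ h3]

end Steps

/-- Section 3 Lemma: if `σ_j f^{(j)}(0), σ_j f^{(j)}(l) ≥ -ε` for
`1 ≤ j ≤ k-1` and `|f^{(k)}| ≥ κ` on `[0, l]` (`0 ≤ l ≤ 1`), then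
`|f(l) - f(0)| ≥ κ l^k / k! - (k-1) ε l`. -/
theorem finite_type_lower_bound (k : ℕ) (hk : 1 ≤ k) (l : ℝ) (hl0 : 0 ≤ l) (hl1 : l ≤ 1)
    (f : ℝ → ℝ) (hf : ContDiffOn ℝ k f (Icc 0 l))
    (σ : ℕ → ℝ) (hσ : ∀ j, 1 ≤ j → j ≤ k - 1 → σ j = 1 ∨ σ j = -1)
    (ε κ : ℝ) (hε : 0 < ε) (hκ : 0 < κ)
    (hend : ∀ j, 1 ≤ j → j ≤ k - 1 →
      -ε ≤ σ j * iteratedDerivWithin j f (Icc 0 l) 0 ∧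
      -ε ≤ σ j * iteratedDerivWithin j f (Icc 0 l) l)
    (hfk : ∀ t ∈ Icc 0 l, κ ≤ |iteratedDerivWithin k f (Icc 0 l) t|) :
    κ * l ^ k / (Nat.factorial k) - ((k : ℝ) - 1) * ε * l ≤ |f l - f 0| := by
  rcases eq_or_lt_of_le hl0 with h | hl
  · subst h
    have hz : (0:ℝ) ^ k = 0 := zero_pow (by omega)
    rw [hz]
    simp
  clear hl0
  have ud : UniqueDiffOn ℝ (Icc (0:ℝ) l) := uniqueDiffOn_Icc hl
  set D : ℕ → ℝ → ℝ := fun j => iteratedDerivWithin j f (Icc 0 l) with hDdef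
  have hderiv : ∀ j, j < k → ∀ t ∈ Ioo 0 l, HasDerivAt (D j) (D (j + 1) t) t := by
    intro j hj t ht
    have hts : t ∈ Icc 0 l := Ioo_subset_Icc_self ht
    have h1 : DifferentiableOn ℝ (D j) (Icc 0 l) :=
      hf.differentiableOn_iteratedDerivWithin (by exact_mod_cast hj) ud
    have h2 : HasDerivWithinAt (D j) (derivWithin (D j) (Icc 0 l) t) (Icc 0 l) t :=
      (h1 t hts).hasDerivWithinAt
    have h3 : D (j + 1) t = derivWithin (D j) (Icc 0 l) t :=
      congrFun iteratedDerivWithin_succ t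
    rw [h3]
    exact h2.hasDerivAt (Icc_mem_nhds ht.1 ht.2)
  have hcont : ∀ j, j ≤ k → ContinuousOn (D j) (Icc 0 l) := by
    intro j hj
    exact hf.continuousOn_iteratedDerivWithin (by exact_mod_cast hj) ud
  -- constant sign of the top derivative
  have hsign : ∃ τ : ℝ, (τ = 1 ∨ τ = -1) ∧ ∀ t ∈ Icc 0 l, κ ≤ τ * D k t := by
    have h0s : (0:ℝ) ∈ Icc (0:ℝ) l := ⟨le_refl _, le_of_lt hl⟩
    have hchoice : ∀ t ∈ Icc (0:ℝ) l, κ ≤ D k t ∨ D k t ≤ -κ := by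
      intro t ht
      rcases le_abs.mp (hfk t ht) with h | h
      · left; exact h
      · right; linarith
    have hnz : ∀ c ∈ Icc (0:ℝ) l, D k c ≠ 0 := by
      intro c hc h0
      have h1 := hfk c hc
      have h2 : iteratedDerivWithin k f (Icc 0 l) c = 0 := h0
      rw [h2, abs_zero] at h1
      linarith
    rcases hchoice 0 h0s with h0 | h0
    · refine ⟨1, Or.inl rfl, fun t ht => ?_⟩
      rw [one_mul]
      rcases hchoice t ht with h | h
      · exact h
      · exfalso
        have hsub : Icc (0:ℝ) t ⊆ Icc 0 l := Icc_subset_Icc le_rfl ht.2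
        have hivt := intermediate_value_Icc' ht.1 ((hcont k le_rfl).mono hsub)
        have h0mem : (0:ℝ) ∈ Icc (D k t) (D k 0) := ⟨by linarith, by linarith⟩
        obtain ⟨c, hc, hc0⟩ := hivt h0mem
        exact hnz c (hsub hc) hc0
    · refine ⟨-1, Or.inr rfl, fun t ht => ?_⟩
      rcases hchoice t ht with h | h
      · exfalso
        have hsub : Icc (0:ℝ) t ⊆ Icc 0 l := Icc_subset_Icc le_rfl ht.2
        have hivt := intermediate_value_Icc ht.1 ((hcont k le_rfl).mono hsub)
        have h0mem : (0:ℝ) ∈ Icc (D k 0) (D k t) := ⟨by linarith, by linarith⟩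
        obtain ⟨c, hc, hc0⟩ := hivt h0mem
        exact hnz c (hsub hc) hc0
      · linarith
  -- main downward induction
  have main : ∀ m : ℕ, ∀ j : ℕ, j + m = k → 1 ≤ j →
      ∃ τ : ℝ, (τ = 1 ∨ τ = -1) ∧
        ((∀ t ∈ Icc (0:ℝ) l, κ * t ^ m / m.factorial - m * ε ≤ τ * D j t) ∨
         (∀ t ∈ Icc (0:ℝ) l, κ * (l - t) ^ m / m.factorial - m * ε ≤ τ * D j t)) := by
    intro m
    induction m with
    | zero =>
      intro j hj _
      obtain ⟨τ, hτ, hb⟩ := hsign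
      refine ⟨τ, hτ, Or.inl fun t ht => ?_⟩
      have := hb t ht
      simp only [pow_zero, Nat.factorial_zero, Nat.cast_zero]
      have hjk : j = k := by omega
      rw [hjk]
      push_cast
      linarith
    | succ m ih =>
      intro j hj hj1
      obtain ⟨τ, hτ, hb⟩ := ih (j + 1) (by omega) (by omega)
      have hjk1 : 1 ≤ j := hj1
      have hjk2 : j ≤ k - 1 := by omega
      have hjlt : j < k := by omega
      obtain ⟨he0, hel⟩ := hend j hjk1 hjk2
      have hFc : ContinuousOn (fun t => τ * D j t) (Icc 0 l) :=
        (hcont j (le_of_lt hjlt)).const_smul τ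
      have hFd : ∀ t ∈ Ioo 0 l, HasDerivAt (fun t => τ * D j t) (τ * D (j + 1) t) t :=
        fun t ht => (hderiv j hjlt t ht).const_mul τ
      have hτabs : τ * τ = 1 := by rcases hτ with h | h <;> rw [h] <;> ring
      -- relation between σ j and τ
      have hσj := hσ j hjk1 hjk2
      have hcases : (-ε ≤ τ * D j 0 ∧ -ε ≤ τ * D j l) ∨
          (τ * D j 0 ≤ ε ∧ τ * D j l ≤ ε) := by
        rcases hσj with h | h <;> rcases hτ with h' | h'
        · left; rw [h'] ; rw [h] at he0 hel; constructor <;> linarith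
        · right; rw [h'] ; rw [h] at he0 hel; constructor <;> linarith
        · right; rw [h'] ; rw [h] at he0 hel; constructor <;> linarith
        · left; rw [h'] ; rw [h] at he0 hel; constructor <;> linarith
      have hmε : ∀ t ∈ Icc (0:ℝ) l, (m : ℝ) * ε * t ≤ m * ε := by
        intro t ht
        have h1 : (0:ℝ) ≤ (m : ℝ) * ε := by positivity
        nlinarith [ht.1, ht.2, hl1]
      rcases hb with hb | hb
      · -- center 0 bound for D (j+1)
        have hmono := monoA (F := fun t => τ * D j t) (F' := fun t => τ * D (j + 1) t)
          hl hκ hFc hFd hb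
        rcases hcases with ⟨h0, _⟩ | ⟨_, hle⟩
        · -- integrate from 0
          refine ⟨τ, hτ, Or.inl fun t ht => ?_⟩
          have h4 := hmono ⟨le_refl _, le_of_lt hl⟩ ht ht.1
          have hz0 : (0:ℝ) ^ (m + 1) = 0 := zero_pow (Nat.succ_ne_zero m)
          simp only [hz0, mul_zero, sub_zero, add_zero] at h4
          have h5 := hmε t ht
          have : κ * t ^ (m + 1) / (m + 1).factorial
              = κ / (m + 1).factorial * t ^ (m + 1) := by ring
          rw [this]
          push_cast
          linarith [h4, h5]
        · -- integrate from l, flip sign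
          refine ⟨-τ, by rcases hτ with h | h <;> simp [h], Or.inr fun t ht => ?_⟩
          have h4 := hmono ht ⟨le_of_lt hl, le_refl _⟩ ht.2
          simp only at h4
          have hsup := super_add ht.1 ht.2 m
          have h5 : (m : ℝ) * ε * (l - t) ≤ m * ε := by
            have h1 : (0:ℝ) ≤ (m : ℝ) * ε := by positivity
            nlinarith [ht.1, ht.2, hl1]
          have hmul := mul_le_mul_of_nonneg_left hsup
            (le_of_lt (show (0:ℝ) < κ / (m + 1).factorial by positivity))
          rw [mul_add] at hmul
          have : κ * (l - t) ^ (m + 1) / (m + 1).factorial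
              = κ / (m + 1).factorial * (l - t) ^ (m + 1) := by ring
          rw [this]
          have hgoal : -τ * D j t = -(τ * D j t) := by ring
          rw [hgoal]
          push_cast
          linarith [h4, h5, hmul]
      · -- center l bound for D (j+1)
        have hmono := monoB (F := fun t => τ * D j t) (F' := fun t => τ * D (j + 1) t)
          hl hκ hFc hFd hb
        rcases hcases with ⟨h0, _⟩ | ⟨_, hle⟩
        · -- integrate from 0, keep sign, center switches to 0
          refine ⟨τ, hτ, Or.inl fun t ht => ?_⟩
          have h4 := hmono ⟨le_refl _, le_of_lt hl⟩ ht ht.1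
          simp only [sub_zero, mul_zero, add_zero] at h4
          have h5 := hmε t ht
          have hsup := super_add ht.1 ht.2 m
          have hmul := mul_le_mul_of_nonneg_left hsup
            (le_of_lt (show (0:ℝ) < κ / (m + 1).factorial by positivity))
          rw [mul_add] at hmul
          have : κ * t ^ (m + 1) / (m + 1).factorial
              = κ / (m + 1).factorial * t ^ (m + 1) := by ring
          rw [this]
          push_cast
          linarith [h4, h5, hmul]
        · -- integrate from l, flip sign, center stays l
          refine ⟨-τ, by rcases hτ with h | h <;> simp [h], Or.inr fun t ht => ?_⟩
          have h4 := hmono ht ⟨le_of_lt hl, le_refl _⟩ ht.2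
          have hz0 : (0:ℝ) ^ (m + 1) = 0 := zero_pow (Nat.succ_ne_zero m)
          simp only [sub_self, hz0, mul_zero, add_zero] at h4
          have h5 := hmε t ht
          have h6 : (0:ℝ) ≤ (m:ℝ) * ε * t :=
            mul_nonneg (by positivity) ht.1
          have : κ * (l - t) ^ (m + 1) / (m + 1).factorial
              = κ / (m + 1).factorial * (l - t) ^ (m + 1) := by ring
          rw [this]
          have hgoal : -τ * D j t = -(τ * D j t) := by ring
          rw [hgoal]
          have h7 := hmε l ⟨le_of_lt hl, le_refl _⟩
          push_cast
          linarith [h4, h5, h6, h7]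
  -- final integration
  obtain ⟨τ, hτ, hb⟩ := main (k - 1) 1 (by omega) le_rfl
  have hfc : ContinuousOn (fun t => τ * f t) (Icc 0 l) := by
    apply ContinuousOn.const_smul _ τ
    have := hcont 0 (by omega)
    simpa [hDdef, iteratedDerivWithin_zero] using this
  have hfd : ∀ t ∈ Ioo 0 l, HasDerivAt (fun t => τ * f t) (τ * D 1 t) t := by
    intro t ht
    have := (hderiv 0 (by omega) t ht).const_mul τ
    simpa [hDdef, iteratedDerivWithin_zero] using this
  have hkm : (k - 1) + 1 = k := by omega
  have hcastk : ((k - 1 : ℕ) : ℝ) = (k : ℝ) - 1 := by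
    have : (1:ℕ) ≤ k := hk
    push_cast [Nat.cast_sub this]
    ring
  have habs : τ * (f l - f 0) ≤ |f l - f 0| := by
    rcases hτ with h | h <;> rw [h]
    · rw [one_mul]; exact le_abs_self _
    · rw [neg_one_mul]; exact neg_le_abs _
  have hfacpos : (0:ℝ) < (k.factorial : ℝ) := by positivity
  rcases hb with hb | hb
  · have hmono := monoA (m := k - 1) (F := fun t => τ * f t) (F' := fun t => τ * D 1 t)
      hl hκ hfc hfd hb
    have h4 := hmono ⟨le_refl _, le_of_lt hl⟩ ⟨le_of_lt hl, le_refl _⟩ (le_of_lt hl)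
    simp only [hkm] at h4
    have hz : κ / (k.factorial : ℝ) * (0:ℝ) ^ k = 0 := by
      rw [zero_pow (by omega)]; ring
    have heq : κ * l ^ k / k.factorial = κ / k.factorial * l ^ k := by ring
    rw [heq, ← hcastk]
    nlinarith [h4, hz, habs]
  · have hmono := monoB (m := k - 1) (F := fun t => τ * f t) (F' := fun t => τ * D 1 t)
      hl hκ hfc hfd hb
    have h4 := hmono ⟨le_refl _, le_of_lt hl⟩ ⟨le_of_lt hl, le_refl _⟩ (le_of_lt hl)
    simp only [hkm, sub_zero, sub_self] at h4
    have hz : κ / (k.factorial : ℝ) * (0:ℝ) ^ k = 0 := by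
      rw [zero_pow (by omega)]; ring
    have heq : κ * l ^ k / k.factorial = κ / k.factorial * l ^ k := by ring
    rw [heq, ← hcastk]
    nlinarith [h4, hz, habs]
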